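/- For every integer n ≥ 5 with n ≡ 1 (mod 8), the 2-adic valuation of T_n − 1 is at least 4. -/
import Mathlib

/-- The Tribonacci sequence: T 0 = 0, T 1 = T 2 = 1, T (n+3) = T (n+2) + T (n+1) + T n. -/
def trib : ℕ → ℕ
  | 0 => 0
  | 1 => 1
  | 2 => 1
  | n + 3 => trib (n + 2) + trib (n + 1) + trib n

lemma trib_step (n : ℕ) : trib (n+3) = trib (n+2) + trib (n+1) + trib n := rfl

lemma trib_0 : trib 0 = 0 := rfl
lemma trib_1 : trib 1 = 1 := rfl
lemma trib_2 : trib 2 = 1 := rfl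
lemma trib_3 : trib 3 = 2 := by
  show trib (0+3) = 2
  rw [trib_step, trib_2, trib_1, trib_0]
lemma trib_4 : trib 4 = 4 := by
  show trib (1+3) = 4
  rw [trib_step, trib_3, trib_2, trib_1]
lemma trib_5 : trib 5 = 7 := by
  show trib (2+3) = 7
  rw [trib_step, trib_4, trib_3, trib_2]
lemma trib_6 : trib 6 = 13 := by
  show trib (3+3) = 13
  rw [trib_step, trib_5, trib_4, trib_3]
lemma trib_7 : trib 7 = 24 := by
  show trib (4+3) = 24
  rw [trib_step, trib_6, trib_5, trib_4]
lemma trib_8 : trib 8 = 44 := by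
  show trib (5+3) = 44
  rw [trib_step, trib_7, trib_6, trib_5]
lemma trib_9 : trib 9 = 81 := by
  show trib (6+3) = 81
  rw [trib_step, trib_8, trib_7, trib_6]
lemma trib_10 : trib 10 = 149 := by
  show trib (7+3) = 149
  rw [trib_step, trib_9, trib_8, trib_7]
lemma trib_11 : trib 11 = 274 := by
  show trib (8+3) = 274
  rw [trib_step, trib_10, trib_9, trib_8]
lemma trib_12 : trib 12 = 504 := by
  show trib (9+3) = 504
  rw [trib_step, trib_11, trib_10, trib_9]
lemma trib_13 : trib 13 = 927 := by
  show trib (10+3) = 927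
  rw [trib_step, trib_12, trib_11, trib_10]
lemma trib_14 : trib 14 = 1705 := by
  show trib (11+3) = 1705
  rw [trib_step, trib_13, trib_12, trib_11]
lemma trib_15 : trib 15 = 3136 := by
  show trib (12+3) = 3136
  rw [trib_step, trib_14, trib_13, trib_12]
lemma trib_16 : trib 16 = 5768 := by
  show trib (13+3) = 5768
  rw [trib_step, trib_15, trib_14, trib_13]
lemma trib_17 : trib 17 = 10609 := by
  show trib (14+3) = 10609
  rw [trib_step, trib_16, trib_15, trib_14]
lemma trib_18 : trib 18 = 19513 := by
  show trib (15+3) = 19513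
  rw [trib_step, trib_17, trib_16, trib_15]
lemma trib_19 : trib 19 = 35890 := by
  show trib (16+3) = 35890
  rw [trib_step, trib_18, trib_17, trib_16]
lemma trib_20 : trib 20 = 66012 := by
  show trib (17+3) = 66012
  rw [trib_step, trib_19, trib_18, trib_17]
lemma trib_21 : trib 21 = 121415 := by
  show trib (18+3) = 121415
  rw [trib_step, trib_20, trib_19, trib_18]
lemma trib_22 : trib 22 = 223317 := by
  show trib (19+3) = 223317
  rw [trib_step, trib_21, trib_20, trib_19]
lemma trib_23 : trib 23 = 410744 := by
  show trib (20+3) = 410744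
  rw [trib_step, trib_22, trib_21, trib_20]
lemma trib_24 : trib 24 = 755476 := by
  show trib (21+3) = 755476
  rw [trib_step, trib_23, trib_22, trib_21]
lemma trib_25 : trib 25 = 1389537 := by
  show trib (22+3) = 1389537
  rw [trib_step, trib_24, trib_23, trib_22]
lemma trib_26 : trib 26 = 2555757 := by
  show trib (23+3) = 2555757
  rw [trib_step, trib_25, trib_24, trib_23]
lemma trib_27 : trib 27 = 4700770 := by
  show trib (24+3) = 4700770
  rw [trib_step, trib_26, trib_25, trib_24]
lemma trib_28 : trib 28 = 8646064 := by
  show trib (25+3) = 8646064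
  rw [trib_step, trib_27, trib_26, trib_25]
lemma trib_29 : trib 29 = 15902591 := by
  show trib (26+3) = 15902591
  rw [trib_step, trib_28, trib_27, trib_26]
lemma trib_30 : trib 30 = 29249425 := by
  show trib (27+3) = 29249425
  rw [trib_step, trib_29, trib_28, trib_27]
lemma trib_31 : trib 31 = 53798080 := by
  show trib (28+3) = 53798080
  rw [trib_step, trib_30, trib_29, trib_28]
lemma trib_32 : trib 32 = 98950096 := by
  show trib (29+3) = 98950096
  rw [trib_step, trib_31, trib_30, trib_29]
lemma trib_33 : trib 33 = 181997601 := by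
  show trib (30+3) = 181997601
  rw [trib_step, trib_32, trib_31, trib_30]
lemma trib_34 : trib 34 = 334745777 := by
  show trib (31+3) = 334745777
  rw [trib_step, trib_33, trib_32, trib_31]

lemma trib_per_aux : ∀ n : ℕ, trib (n+32) % 16 = trib n % 16 ∧
    trib (n+33) % 16 = trib (n+1) % 16 ∧ trib (n+34) % 16 = trib (n+2) % 16 := by
  intro n
  induction n with
  | zero =>
    refine ⟨?_, ?_, ?_⟩ <;> simp [trib_32, trib_33, trib_34, trib_0, trib_1, trib_2]
  | succ k ih =>
    obtain ⟨h0, h1, h2⟩ := ih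
    refine ⟨h1, h2, ?_⟩
    have e1 : trib (k+1+34) = trib (k+34) + trib (k+33) + trib (k+32) := trib_step (k+32)
    have e2 : trib (k+1+2) = trib (k+2) + trib (k+1) + trib k := trib_step k
    rw [e1, e2]
    omega

lemma trib_mod16 : ∀ n : ℕ, n % 8 = 1 → trib n % 16 = 1 := by
  intro n
  induction n using Nat.strong_induction_on with
  | _ n ih =>
    intro hmod
    rcases lt_or_ge n 32 with h | h
    · interval_cases n <;> simp_all [trib_1, trib_9, trib_17, trib_25]
    · obtain ⟨m, rfl⟩ : ∃ m, n = m + 32 := ⟨n - 32, by omega⟩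
      have := (trib_per_aux m).1
      rw [this]
      exact ih m (by omega) (by omega)

lemma trib_pos : ∀ n : ℕ, 1 ≤ trib (n+1) ∧ 1 ≤ trib (n+2) := by
  intro n
  induction n with
  | zero => exact ⟨le_refl 1, le_refl 1⟩
  | succ k ih =>
    refine ⟨ih.2, ?_⟩
    have e : trib (k+1+2) = trib (k+2) + trib (k+1) + trib k := trib_step k
    rw [e]
    omega

/-- For every `n ≥ 5` with `n ≡ 1 (mod 8)`, the 2-adic valuation of `T_n - 1` is at least 4. -/
theorem two_adic_valuation_trib_minus_one_ge_four
    (n : ℕ) (hn : 5 ≤ n) (hmod : n % 8 = 1) :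
    4 ≤ padicValNat 2 (trib n - 1) := by
  have h16 := trib_mod16 n hmod
  have hge : 2 ≤ trib n := by
    obtain ⟨m, rfl⟩ : ∃ m, n = m + 6 + 3 := ⟨n - 9, by omega⟩
    have h1 := (trib_pos (m+6)).1
    have h2 := (trib_pos (m+6)).2
    have := trib_step (m+6)
    omega
  have hne : trib n - 1 ≠ 0 := by omega
  rw [← padicValNat_dvd_iff_le hne]
  omega
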